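/- arXiv:2305.13856 — 3 statements merged into one kernel-verified Lean document; each statement's English description precedes it below -/
import Mathlib

section
/- Let F : ℝ^d → ℝ be L-smooth (‖∇F(w) − ∇F(w')‖ ≤ L‖w − w'‖ for all w, w'). Let u ∈ ℝ^d with u ≠ 0, η > 0, and w⁺ = w − η u/‖u‖. Then for any γ ∈ (0, 1), F(w⁺) ≤ F(w) − η((1−γ)/(1+γ))‖∇F(w)‖ + η(2/(γ(1+γ)))‖u − ∇F(w)‖ + η²L/2. -/
open InnerProductSpace

lemma descent {d : ℕ} (F : EuclideanSpace ℝ (Fin d) → ℝ) (L : ℝ)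
    (hdiff : Differentiable ℝ F)
    (hL : ∀ w w', ‖gradient F w - gradient F w'‖ ≤ L * ‖w - w'‖)
    (w v : EuclideanSpace ℝ (Fin d)) :
    F (w + v) ≤ F w + ⟪gradient F w, v⟫_ℝ + L / 2 * ‖v‖ ^ 2 := by
  rcases eq_or_ne v 0 with rfl | hv
  · simp
  have hL0 : 0 ≤ L := by
    have := hL (w + v) w
    have h1 : (0:ℝ) < ‖w + v - w‖ := by simp [hv]
    nlinarith [norm_nonneg (gradient F (w + v) - gradient F w)]
  -- gradient is Lipschitz, hence continuous
  have hlip : LipschitzWith (Real.toNNReal L) (gradient F) := by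
    apply LipschitzWith.of_dist_le_mul
    intro x y
    rw [dist_eq_norm, dist_eq_norm, Real.coe_toNNReal L hL0]
    exact hL x y
  set g : ℝ → ℝ := fun t => F (w + t • v) with hg
  have hline : ∀ t : ℝ, HasDerivAt (fun s : ℝ => w + s • v) v t := by
    intro t
    simpa using ((hasDerivAt_id t).smul_const v).const_add w
  have hderiv : ∀ t : ℝ, HasDerivAt g (⟪gradient F (w + t • v), v⟫_ℝ) t := by
    intro t
    have hF : HasFDerivAt F (InnerProductSpace.toDual ℝ _ (gradient F (w + t • v)))
        (w + t • v) := ((hdiff _).hasGradientAt).hasFDerivAt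
    simpa [hg, Function.comp_def] using (hF.comp_hasDerivAt t (hline t))
  have hcont : Continuous fun t : ℝ => ⟪gradient F (w + t • v), v⟫_ℝ := by
    apply Continuous.inner
    · exact hlip.continuous.comp (by continuity)
    · exact continuous_const
  have hint : ∫ t in (0:ℝ)..1, ⟪gradient F (w + t • v), v⟫_ℝ = g 1 - g 0 := by
    exact intervalIntegral.integral_eq_sub_of_hasDerivAt
      (fun t _ => hderiv t) (hcont.intervalIntegrable 0 1)
  have hbound : ∫ t in (0:ℝ)..1, ⟪gradient F (w + t • v), v⟫_ℝ
      ≤ ∫ t in (0:ℝ)..1, (⟪gradient F w, v⟫_ℝ + L * t * ‖v‖ ^ 2) := by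
    apply intervalIntegral.integral_mono_on (by norm_num)
      (hcont.intervalIntegrable 0 1)
      ((by continuity : Continuous fun t : ℝ => ⟪gradient F w, v⟫_ℝ + L * t * ‖v‖ ^ 2).intervalIntegrable 0 1)
    intro t ht
    have h1 : ⟪gradient F (w + t • v), v⟫_ℝ - ⟪gradient F w, v⟫_ℝ
        = ⟪gradient F (w + t • v) - gradient F w, v⟫_ℝ := by
      rw [inner_sub_left]
    have h2 : ⟪gradient F (w + t • v) - gradient F w, v⟫_ℝ
        ≤ ‖gradient F (w + t • v) - gradient F w‖ * ‖v‖ := real_inner_le_norm _ _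
    have h3 : ‖gradient F (w + t • v) - gradient F w‖ ≤ L * (t * ‖v‖) := by
      have := hL (w + t • v) w
      simpa [norm_smul, abs_of_nonneg ht.1] using this
    nlinarith [norm_nonneg v, mul_nonneg (mul_nonneg hL0 ht.1) (norm_nonneg v)]
  have hval : ∫ t in (0:ℝ)..1, (⟪gradient F w, v⟫_ℝ + L * t * ‖v‖ ^ 2)
      = ⟪gradient F w, v⟫_ℝ + L / 2 * ‖v‖ ^ 2 := by
    have he : ∀ t : ℝ, ⟪gradient F w, v⟫_ℝ + L * t * ‖v‖ ^ 2
        = ⟪gradient F w, v⟫_ℝ + (L * ‖v‖ ^ 2) * t := fun t => by ring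
    simp_rw [he]
    rw [intervalIntegral.integral_add (intervalIntegrable_const)
      ((by fun_prop : Continuous (fun t : ℝ => L * ‖v‖ ^ 2 * t)).intervalIntegrable 0 1),
      intervalIntegral.integral_const, intervalIntegral.integral_const_mul, integral_id]
    simp [smul_eq_mul]
    ring
  have := hint ▸ hbound
  simp only [hg] at this ⊢
  have h0 : g 0 = F w := by simp [hg]
  have h1 : g 1 = F (w + v) := by simp [hg]
  rw [hval] at this
  simp only [hg] at h0 h1
  linarith [this, h0, h1]

lemma inner_bound {d : ℕ} (g u : EuclideanSpace ℝ (Fin d)) (hu : u ≠ 0)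
    (γ : ℝ) (hγ : γ ∈ Set.Ioo (0 : ℝ) 1) :
    -(⟪g, u⟫_ℝ / ‖u‖) ≤ -((1 - γ) / (1 + γ)) * ‖g‖ + (2 / (γ * (1 + γ))) * ‖u - g‖ := by
  obtain ⟨hγ0, hγ1⟩ := hγ
  set e := u - g with he
  set a := ‖g‖ with ha
  set b := ‖e‖ with hb
  have hn : (0:ℝ) < ‖u‖ := norm_pos_iff.mpr hu
  have hab : ‖u‖ ≤ a + b := by
    calc ‖u‖ = ‖g + e‖ := by rw [he]; congr 1; abel
      _ ≤ a + b := norm_add_le _ _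
  have hinner : a ^ 2 - a * b ≤ ⟪g, u⟫_ℝ := by
    have hgu : ⟪g, u⟫_ℝ = ⟪g, g⟫_ℝ + ⟪g, e⟫_ℝ := by
      rw [← inner_add_right]; congr 1; rw [he]; abel
    have h1 : ⟪g, g⟫_ℝ = a ^ 2 := real_inner_self_eq_norm_sq g
    have h2 : -(a * b) ≤ ⟪g, e⟫_ℝ := by
      have := abs_real_inner_le_norm g e
      rw [abs_le] at this; linarith [this.1]
    linarith
  have hcs : -⟪g, u⟫_ℝ ≤ a * ‖u‖ := by
    have := abs_real_inner_le_norm g u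
    rw [abs_le] at this; linarith [this.1]
  have ha0 : 0 ≤ a := norm_nonneg _
  have hb0 : 0 ≤ b := norm_nonneg _
  rcases le_or_gt b (γ * a) with hcase | hcase
  · -- small error case
    have ha' : 0 < a := by
      by_contra h
      push_neg at h
      have haz : a = 0 := le_antisymm h ha0
      have hb' : b = 0 := by nlinarith
      have : u = 0 := by
        have hg0 : g = 0 := norm_eq_zero.mp haz
        have he0 : e = 0 := norm_eq_zero.mp hb'
        rw [he] at he0
        rw [sub_eq_zero.mp he0, hg0]
      exact hu this
    have herr : 0 ≤ (2 / (γ * (1 + γ))) * b := by positivity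
    have key : ((1 - γ) / (1 + γ)) * a ≤ ⟪g, u⟫_ℝ / ‖u‖ := by
      rw [div_mul_eq_mul_div, div_le_div_iff₀ (by linarith) hn]
      have h1 : a * (a - b) ≤ ⟪g, u⟫_ℝ := by nlinarith
      have h2 : (0:ℝ) ≤ a - b := by nlinarith
      nlinarith [mul_nonneg (mul_nonneg ha0 h2) (sub_nonneg.mpr hab)]
    linarith
  · -- large error case
    have h1 : -(⟪g, u⟫_ℝ / ‖u‖) ≤ a := by
      rw [neg_div', div_le_iff₀ hn]
      exact hcs
    have h2 : a ≤ -((1 - γ) / (1 + γ)) * a + (2 / (γ * (1 + γ))) * b := by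
      rw [← sub_nonneg]
      have heq : -((1 - γ) / (1 + γ)) * a + (2 / (γ * (1 + γ))) * b - a
          = (2 * (b - γ * a)) / (γ * (1 + γ)) := by
        field_simp
        ring
      rw [heq]
      apply div_nonneg (by nlinarith) (by positivity)
    linarith

theorem stmt10 {d : ℕ} (F : EuclideanSpace ℝ (Fin d) → ℝ) (L : ℝ)
    (hdiff : Differentiable ℝ F)
    (hL : ∀ w w', ‖gradient F w - gradient F w'‖ ≤ L * ‖w - w'‖)
    (w u : EuclideanSpace ℝ (Fin d)) (hu : u ≠ 0) (η : ℝ) (hη : 0 < η)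
    (γ : ℝ) (hγ : γ ∈ Set.Ioo (0 : ℝ) 1) :
    F (w - (η / ‖u‖) • u) ≤
      F w - η * ((1 - γ) / (1 + γ)) * ‖gradient F w‖
        + η * (2 / (γ * (1 + γ))) * ‖u - gradient F w‖ + η ^ 2 * L / 2 := by
  have hn : (0:ℝ) < ‖u‖ := norm_pos_iff.mpr hu
  set v : EuclideanSpace ℝ (Fin d) := -((η / ‖u‖) • u) with hv
  have hwv : w - (η / ‖u‖) • u = w + v := by rw [hv]; abel
  have hnv : ‖v‖ = η := by
    rw [hv, norm_neg, norm_smul, Real.norm_eq_abs, abs_div, abs_of_pos hη,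
      abs_of_pos hn, div_mul_cancel₀ _ hn.ne']
  have hdesc := descent F L hdiff hL w v
  have hin : ⟪gradient F w, v⟫_ℝ = η * (-(⟪gradient F w, u⟫_ℝ / ‖u‖)) := by
    rw [hv, inner_neg_right, real_inner_smul_right]
    field_simp
  have hib := inner_bound (gradient F w) u hu γ hγ
  have hmul : η * (-(⟪gradient F w, u⟫_ℝ / ‖u‖))
      ≤ η * (-((1 - γ) / (1 + γ)) * ‖gradient F w‖
        + (2 / (γ * (1 + γ))) * ‖u - gradient F w‖) :=
    mul_le_mul_of_nonneg_left hib hη.le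
  rw [hwv]
  calc F (w + v) ≤ F w + ⟪gradient F w, v⟫_ℝ + L / 2 * ‖v‖ ^ 2 := hdesc
    _ ≤ F w + η * (-((1 - γ) / (1 + γ)) * ‖gradient F w‖
        + (2 / (γ * (1 + γ))) * ‖u - gradient F w‖) + L / 2 * η ^ 2 := by
        rw [hin, hnv]; linarith
    _ = F w - η * ((1 - γ) / (1 + γ)) * ‖gradient F w‖
        + η * (2 / (γ * (1 + γ))) * ‖u - gradient F w‖ + η ^ 2 * L / 2 := by ring
end

section
/- For any vector g ∈ ℝ^d and any nonzero u ∈ ℝ^d, and any γ ∈ (0, 1), if ‖u − g‖ > γ‖g‖ then −gᵀu/‖u‖ ≤ −((1−γ)/(1+γ))‖g‖ + (2/(γ(1+γ)))‖u − g‖. -/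
theorem stmt12 {d : ℕ} (g u : EuclideanSpace ℝ (Fin d)) (hu : u ≠ 0)
    (γ : ℝ) (hγ : γ ∈ Set.Ioo (0 : ℝ) 1) (herr : γ * ‖g‖ < ‖u - g‖) :
    -(inner ℝ g u : ℝ) / ‖u‖ ≤
      -((1 - γ) / (1 + γ)) * ‖g‖ + (2 / (γ * (1 + γ))) * ‖u - g‖ := by
  obtain ⟨hγ0, hγ1⟩ := hγ
  have hu' : (0:ℝ) < ‖u‖ := norm_pos_iff.mpr hu
  have hcs : |(inner ℝ g u : ℝ)| ≤ ‖g‖ * ‖u‖ := abs_real_inner_le_norm g u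
  have h1 : -(inner ℝ g u : ℝ) / ‖u‖ ≤ ‖g‖ := by
    rw [div_le_iff₀ hu']
    nlinarith [abs_le.mp hcs]
  have h2 : ‖g‖ ≤ -((1 - γ) / (1 + γ)) * ‖g‖ + (2 / (γ * (1 + γ))) * ‖u - g‖ := by
    have hγ1' : (0:ℝ) < 1 + γ := by linarith
    have e : -((1 - γ) / (1 + γ)) * ‖g‖ + (2 / (γ * (1 + γ))) * ‖u - g‖ - ‖g‖
        = 2 * (‖u - g‖ - γ * ‖g‖) / (γ * (1 + γ)) := by
      field_simp
      ring
    nlinarith [div_nonneg (by nlinarith : (0:ℝ) ≤ 2 * (‖u - g‖ - γ * ‖g‖)) (by positivity : (0:ℝ) ≤ γ * (1 + γ))]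
  linarith
end

section
/- Let F be L-smooth with F(w₀) − F* ≤ F₀, and suppose real numbers e_t ≥ 0 satisfy e_t ≥ E‖u_t − ∇F(w_t)‖, where w_{t+1} = w_t − η u_t/‖u_t‖. Then (1/T)∑_{t=0}^{T−1} E‖∇F(w_t)‖ ≤ 2F₀/(ηT) + (9/T)∑_{t=0}^{T−1} e_t + ηL. -/
open MeasureTheory

private lemma smooth_descent {d : ℕ} (F : EuclideanSpace ℝ (Fin d) → ℝ) (L : ℝ)
    (hdiff : Differentiable ℝ F) (hL0 : 0 ≤ L)
    (hL : ∀ w w', ‖gradient F w - gradient F w'‖ ≤ L * ‖w - w'‖)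
    (x v : EuclideanSpace ℝ (Fin d)) :
    F (x + v) ≤ F x + @inner ℝ _ _ (gradient F x) v + L * ‖v‖ ^ 2 := by
  have hgrad : ∀ (y z : EuclideanSpace ℝ (Fin d)),
      @inner ℝ _ _ (gradient F y) z = fderiv ℝ F y z := by
    intro y z
    simp [gradient, InnerProductSpace.toDual_symm_apply]
  set f : ℝ → ℝ := fun t => F (x + t • v) - t * @inner ℝ _ _ (gradient F x) v with hf
  have hder : ∀ t : ℝ, HasDerivAt f
      (@inner ℝ _ _ (gradient F (x + t • v) - gradient F x) v) t := by
    intro t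
    have h1 : HasDerivAt (fun t : ℝ => x + t • v) v t := by
      simpa using ((hasDerivAt_id t).smul_const v).const_add x
    have h2 : HasDerivAt (fun t : ℝ => F (x + t • v)) (fderiv ℝ F (x + t • v) v) t :=
      (hdiff (x + t • v)).hasFDerivAt.comp_hasDerivAt t h1
    have h3 : HasDerivAt (fun t : ℝ => t * @inner ℝ _ _ (gradient F x) v)
        (@inner ℝ _ _ (gradient F x) v) t := by
      simpa using (hasDerivAt_id t).mul_const (@inner ℝ _ _ (gradient F x) v)
    have := h2.sub h3
    rw [inner_sub_left, hgrad]
    exact this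
  have hbound : ∀ t ∈ Set.Ico (0:ℝ) 1,
      ‖@inner ℝ _ _ (gradient F (x + t • v) - gradient F x) v‖ ≤ L * ‖v‖ ^ 2 := by
    intro t ht
    have h1 : ‖@inner ℝ _ _ (gradient F (x + t • v) - gradient F x) v‖
        ≤ ‖gradient F (x + t • v) - gradient F x‖ * ‖v‖ := norm_inner_le_norm _ _
    have h2 : ‖gradient F (x + t • v) - gradient F x‖ ≤ L * ‖t • v‖ := by
      have := hL (x + t • v) x
      simpa using this
    have h3 : ‖t • v‖ ≤ ‖v‖ := by
      rw [norm_smul, Real.norm_eq_abs, abs_of_nonneg ht.1]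
      nlinarith [norm_nonneg v, ht.1, ht.2.le]
    calc ‖@inner ℝ _ _ (gradient F (x + t • v) - gradient F x) v‖
        ≤ ‖gradient F (x + t • v) - gradient F x‖ * ‖v‖ := h1
      _ ≤ (L * ‖v‖) * ‖v‖ := by
          have : ‖gradient F (x + t • v) - gradient F x‖ ≤ L * ‖v‖ :=
            h2.trans (by nlinarith [norm_nonneg v])
          exact mul_le_mul_of_nonneg_right this (norm_nonneg v)
      _ = L * ‖v‖ ^ 2 := by ring
  have key := norm_image_sub_le_of_norm_deriv_le_segment'
    (f := f) (f' := fun t => @inner ℝ _ _ (gradient F (x + t • v) - gradient F x) v)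
    (C := L * ‖v‖ ^ 2) (a := 0) (b := 1)
    (fun t _ => (hder t).hasDerivWithinAt) hbound 1 (by norm_num)
  have hf1 : f 1 = F (x + v) - @inner ℝ _ _ (gradient F x) v := by simp [hf]
  have hf0 : f 0 = F x := by simp [hf]
  rw [hf1, hf0] at key
  rw [Real.norm_eq_abs] at key
  have := (abs_le.mp key).2
  linarith

theorem stmt18 {Ω : Type*} [MeasurableSpace Ω] (μ : Measure Ω) [IsProbabilityMeasure μ]
    {d : ℕ} (F : EuclideanSpace ℝ (Fin d) → ℝ) (L Fstar F0 η : ℝ) (T : ℕ)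
    (hdiff : Differentiable ℝ F) (hL0 : 0 ≤ L)
    (hL : ∀ w w', ‖gradient F w - gradient F w'‖ ≤ L * ‖w - w'‖)
    (hlow : ∀ w, Fstar ≤ F w)
    (w u : ℕ → Ω → EuclideanSpace ℝ (Fin d))
    (h0 : ∀ ω, F (w 0 ω) - Fstar ≤ F0)
    (hupd : ∀ t ω, w (t + 1) ω = w t ω - (η / ‖u t ω‖) • u t ω)
    (hη : 0 < η) (hT : 0 < T)
    (e : ℕ → ℝ)
    (hint1 : ∀ t, Integrable (fun ω => ‖gradient F (w t ω)‖) μ)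
    (hint2 : ∀ t, Integrable (fun ω => ‖u t ω - gradient F (w t ω)‖) μ)
    (he : ∀ t, ∫ ω, ‖u t ω - gradient F (w t ω)‖ ∂μ ≤ e t) :
    (1 / T : ℝ) * ∑ t ∈ Finset.range T, ∫ ω, ‖gradient F (w t ω)‖ ∂μ ≤
      2 * F0 / (η * T) + (9 / T) * ∑ t ∈ Finset.range T, e t + η * L := by
  -- one-step pointwise bound
  have step : ∀ t ω, η * ‖gradient F (w t ω)‖ ≤
      F (w t ω) - F (w (t+1) ω) + 2 * η * ‖u t ω - gradient F (w t ω)‖ + η ^ 2 * L := by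
    intro t ω
    set x := w t ω
    set a := u t ω
    set g := gradient F x with hg
    by_cases ha : a = 0
    · have hw : w (t+1) ω = x := by
        rw [hupd t ω, show u t ω = 0 from ha]; simp; rfl
      have : ‖a - g‖ = ‖g‖ := by simp [ha]
      rw [hw, this]
      nlinarith [norm_nonneg g, sq_nonneg η]
    · have hna : (0:ℝ) < ‖a‖ := norm_pos_iff.mpr ha
      set v : EuclideanSpace ℝ (Fin d) := -((η / ‖a‖) • a) with hv
      have hw : w (t+1) ω = x + v := by rw [hupd t ω]; simp [hv, sub_eq_add_neg]; rfl
      have hnv : ‖v‖ = η := by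
        rw [hv, norm_neg, norm_smul, Real.norm_eq_abs, abs_of_pos (div_pos hη hna)]
        field_simp
      have hA := smooth_descent F L hdiff hL0 hL x v
      rw [hnv] at hA
      -- inner product bound
      have hinner : @inner ℝ _ _ g v ≤ -η * ‖g‖ + 2 * η * ‖a - g‖ := by
        have h1 : @inner ℝ _ _ g v = -(η / ‖a‖) * @inner ℝ _ _ g a := by
          rw [hv, inner_neg_right, inner_smul_right]; ring
        have h2 : @inner ℝ _ _ g a = @inner ℝ _ _ a a + @inner ℝ _ _ (g - a) a := by
          rw [inner_sub_left]; ring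
        have h3 : @inner ℝ _ _ (g - a) a ≥ -(‖g - a‖ * ‖a‖) := by
          have := abs_real_inner_le_norm (g - a) a
          have := abs_le.mp this
          linarith [this.1]
        have h4 : @inner ℝ _ _ a a = ‖a‖ ^ 2 := real_inner_self_eq_norm_sq a
        have h5 : @inner ℝ _ _ g a ≥ ‖a‖ ^ 2 - ‖g - a‖ * ‖a‖ := by
          rw [h2, h4]; linarith
        have h6 : ‖g‖ - ‖g - a‖ ≤ ‖a‖ := by
          have := norm_sub_norm_le g a
          have h7 : ‖g - a‖ = ‖a - g‖ := norm_sub_rev g a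
          linarith [norm_sub_norm_le g a, h7 ▸ (le_refl (‖g-a‖))]
        have h8 : ‖g - a‖ = ‖a - g‖ := norm_sub_rev g a
        -- ⟪g,v⟫ = -(η/‖a‖) ⟪g,a⟫ ≤ -(η/‖a‖)(‖a‖² - ‖g-a‖‖a‖) = -η‖a‖ + η‖g-a‖
        have h9 : -(η / ‖a‖) * @inner ℝ _ _ g a ≤ -(η / ‖a‖) * (‖a‖ ^ 2 - ‖g - a‖ * ‖a‖) := by
          apply mul_le_mul_of_nonpos_left h5
          have : 0 < η / ‖a‖ := div_pos hη hna
          linarith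
        have h10 : -(η / ‖a‖) * (‖a‖ ^ 2 - ‖g - a‖ * ‖a‖) = -η * ‖a‖ + η * ‖g - a‖ := by
          field_simp; ring
        rw [h1]
        calc -(η / ‖a‖) * @inner ℝ _ _ g a ≤ -η * ‖a‖ + η * ‖g - a‖ := by
              rw [← h10]; exact h9
          _ ≤ -η * (‖g‖ - ‖g - a‖) + η * ‖g - a‖ := by nlinarith
          _ = -η * ‖g‖ + 2 * η * ‖a - g‖ := by rw [← h8]; ring
      rw [hw]
      nlinarith [hA, hinner]
  -- telescoped pointwise bound
  have tele : ∀ ω, ∑ t ∈ Finset.range T, η * ‖gradient F (w t ω)‖ ≤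
      F0 + 2 * η * ∑ t ∈ Finset.range T, ‖u t ω - gradient F (w t ω)‖ + T * (η ^ 2 * L) := by
    intro ω
    have hsum : ∑ t ∈ Finset.range T, η * ‖gradient F (w t ω)‖ ≤
        ∑ t ∈ Finset.range T, (F (w t ω) - F (w (t+1) ω)
          + 2 * η * ‖u t ω - gradient F (w t ω)‖ + η ^ 2 * L) :=
      Finset.sum_le_sum fun t _ => step t ω
    have htel : ∑ t ∈ Finset.range T, (F (w t ω) - F (w (t+1) ω)) = F (w 0 ω) - F (w T ω) := by
      have := Finset.sum_range_sub' (fun t => F (w t ω)) T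
      simpa using this
    have hsplit : ∑ t ∈ Finset.range T, (F (w t ω) - F (w (t+1) ω)
          + 2 * η * ‖u t ω - gradient F (w t ω)‖ + η ^ 2 * L)
        = (F (w 0 ω) - F (w T ω)) + 2 * η * ∑ t ∈ Finset.range T, ‖u t ω - gradient F (w t ω)‖
          + T * (η ^ 2 * L) := by
      rw [Finset.sum_add_distrib, Finset.sum_add_distrib, htel, Finset.mul_sum,
        Finset.sum_const, Finset.card_range]
      ring
    rw [hsplit] at hsum
    have h1 : F (w 0 ω) - F (w T ω) ≤ F0 := by
      have := hlow (w T ω); have := h0 ω; linarith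
    linarith
  -- integrate
  have hintL : Integrable (fun ω => ∑ t ∈ Finset.range T, η * ‖gradient F (w t ω)‖) μ :=
    integrable_finset_sum _ fun t _ => (hint1 t).const_mul η
  have hintR : Integrable (fun ω => F0 + 2 * η *
      ∑ t ∈ Finset.range T, ‖u t ω - gradient F (w t ω)‖ + T * (η ^ 2 * L)) μ := by
    apply Integrable.add _ (integrable_const _)
    exact (integrable_const F0).add
      ((integrable_finset_sum _ fun t _ => hint2 t).const_mul (2 * η))
  have hI := integral_mono hintL hintR (fun ω => tele ω)
  rw [integral_finset_sum _ (fun t _ => (hint1 t).const_mul η)] at hI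
  have hB : Integrable (fun ω => 2 * η * ∑ t ∈ Finset.range T, ‖u t ω - gradient F (w t ω)‖) μ := by
    exact (integrable_finset_sum _ fun t _ => hint2 t).const_mul (2 * η)
  have hA : Integrable (fun ω => F0 + 2 * η * ∑ t ∈ Finset.range T, ‖u t ω - gradient F (w t ω)‖) μ := by
    exact (integrable_const F0).add hB
  have hRint : ∫ ω, (F0 + 2 * η * ∑ t ∈ Finset.range T, ‖u t ω - gradient F (w t ω)‖
      + T * (η ^ 2 * L)) ∂μ
      = F0 + 2 * η * ∑ t ∈ Finset.range T, (∫ ω, ‖u t ω - gradient F (w t ω)‖ ∂μ)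
        + T * (η ^ 2 * L) := by
    rw [integral_add hA (integrable_const _),
      integral_add (integrable_const F0) hB,
      integral_const, integral_const]
    simp [integral_const_mul, integral_finset_sum _ (fun t _ => hint2 t)]
  rw [hRint] at hI
  have hmul : ∀ t, ∫ ω, η * ‖gradient F (w t ω)‖ ∂μ = η * ∫ ω, ‖gradient F (w t ω)‖ ∂μ := by
    intro t; exact integral_const_mul η _
  simp only [hmul] at hI
  rw [← Finset.mul_sum] at hI
  -- bound the error sum
  have hesum : ∑ t ∈ Finset.range T, (∫ ω, ‖u t ω - gradient F (w t ω)‖ ∂μ)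
      ≤ ∑ t ∈ Finset.range T, e t := Finset.sum_le_sum fun t _ => he t
  have hI2 : η * ∑ t ∈ Finset.range T, (∫ ω, ‖gradient F (w t ω)‖ ∂μ)
      ≤ F0 + 2 * η * ∑ t ∈ Finset.range T, e t + T * (η ^ 2 * L) := by
    nlinarith [hI, hesum, hη.le]
  -- final algebra
  have hTpos : (0:ℝ) < T := by exact_mod_cast hT
  have hne : Nonempty Ω := MeasureTheory.Measure.nonempty_of_neZero μ
  have hF0 : 0 ≤ F0 := by
    obtain ⟨ω⟩ := hne
    have := hlow (w 0 ω); have := h0 ω; linarith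
  have hE0 : 0 ≤ ∑ t ∈ Finset.range T, e t := by
    apply Finset.sum_nonneg
    intro t _
    exact le_trans (integral_nonneg fun ω => norm_nonneg _) (he t)
  set S := ∑ t ∈ Finset.range T, (∫ ω, ‖gradient F (w t ω)‖ ∂μ) with hS
  set E := ∑ t ∈ Finset.range T, e t with hE
  rw [one_div, inv_mul_le_iff₀ hTpos]
  have hdiv : (T:ℝ) * (2 * F0 / (η * T) + 9 / T * E + η * L)
      = 2 * F0 / η + 9 * E + T * (η * L) := by
    field_simp
  rw [hdiv]
  have hG : η * (2 * F0 / η) = 2 * F0 := by field_simp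
  nlinarith [hI2, mul_nonneg hη.le hE0, hη, hF0]
end
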